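/- Let w_α(x) = x − (1/α)(1 − exp(α(x−1))) for α > 0, x ∈ [0,1]. If α2 > α1 > 0, then w_{α2}(x) > w_{α1}(x) for all x ∈ [0,1). Consequently the reserve prices θres(α) := the unique root of w_α in [0,1] satisfy θres(α2) < θres(α1): more flexible consumers (larger α) face a lower reserve price. -/

import Mathlib

/-- Virtual valuation of the truncated exponential distribution with parameter `α` on `[0,1]`. -/
noncomputable def virtualVal (α x : ℝ) : ℝ :=
  x - (1/α) * (1 - Real.exp (α * (x - 1)))

/-- key convexity fact: for `0 < a < b`, `a (1 - e^{-b}) < b (1 - e^{-a})`. -/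
lemma key_ineq {a b : ℝ} (ha : 0 < a) (hab : a < b) :
    a * (1 - Real.exp (-b)) < b * (1 - Real.exp (-a)) := by
  have hb : 0 < b := ha.trans hab
  have hw1 : (0:ℝ) < a / b := div_pos ha hb
  have hw2 : (0:ℝ) < (b - a) / b := div_pos (by linarith) hb
  have hconv := strictConvexOn_exp.2 (Set.mem_univ (-b)) (Set.mem_univ 0)
    (by intro h; nlinarith) hw1 hw2 (by field_simp; ring)
  simp only [smul_eq_mul, mul_zero, add_zero, Real.exp_zero, mul_one] at hconv
  have harg : a / b * -b = -a := by field_simp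
  rw [harg] at hconv
  have h' : b * Real.exp (-a) < a * Real.exp (-b) + (b - a) := by
    have := mul_lt_mul_of_pos_left hconv hb
    field_simp at this
    linarith
  nlinarith

/-- `virtualVal α` is strictly monotone in `x`. -/
lemma virtualVal_strictMono {α : ℝ} (hα : 0 < α) : StrictMono (virtualVal α) := by
  intro x y hxy
  unfold virtualVal
  have hexp : Real.exp (α * (x - 1)) < Real.exp (α * (y - 1)) := by
    apply Real.exp_lt_exp.2; nlinarith
  have hα' : (0:ℝ) < 1/α := by positivity
  nlinarith

theorem stmt14 (α1 α2 : ℝ) (h1 : 0 < α1) (h12 : α1 < α2) :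
    (∀ x ∈ Set.Ico (0:ℝ) 1, virtualVal α1 x < virtualVal α2 x) ∧
    (∀ θ1 θ2 : ℝ, θ1 ∈ Set.Icc (0:ℝ) 1 → θ2 ∈ Set.Icc (0:ℝ) 1 →
      virtualVal α1 θ1 = 0 → virtualVal α2 θ2 = 0 → θ2 < θ1) := by
  have h2 : 0 < α2 := h1.trans h12
  have main : ∀ x ∈ Set.Ico (0:ℝ) 1, virtualVal α1 x < virtualVal α2 x := by
    intro x hx
    obtain ⟨hx0, hx1⟩ := hx
    set t : ℝ := 1 - x with ht
    have htpos : 0 < t := by simp [ht]; linarith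
    have key := key_ineq (mul_pos h1 htpos)
      (by nlinarith : α1 * t < α2 * t)
    have e1 : α1 * (x - 1) = -(α1 * t) := by ring
    have e2 : α2 * (x - 1) = -(α2 * t) := by ring
    unfold virtualVal
    rw [e1, e2]
    rw [sub_lt_sub_iff_left, div_mul_eq_mul_div, div_mul_eq_mul_div, one_mul, one_mul,
      div_lt_div_iff₀ h2 h1]
    nlinarith
  refine ⟨main, ?_⟩
  intro θ1 θ2 hθ1 hθ2 hr1 hr2
  have hθ2lt1 : θ2 < 1 := by
    rcases lt_or_eq_of_le hθ2.2 with h | h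
    · exact h
    · exfalso
      rw [h] at hr2
      unfold virtualVal at hr2
      simp at hr2
  have hlt : virtualVal α1 θ2 < 0 := by
    have := main θ2 ⟨hθ2.1, hθ2lt1⟩
    linarith [hr2 ▸ this]
  have := virtualVal_strictMono h1
  by_contra hcon
  push_neg at hcon
  have : virtualVal α1 θ1 ≤ virtualVal α1 θ2 := (virtualVal_strictMono h1).monotone hcon
  linarith
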